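/- There exists a constant C > 0 such that for every positive integer L, every Δ ∈ (0, 1/2], and every real x with 0 < |x| < 2L, the function d_Δ(x) = (1/L)·(Δ·cot(πΔx/L) − (1/2)·cot(πx/(2L))) satisfies |d_Δ(x)| ≤ C/(2L − |x|) (with the convention d_Δ(0) = 0, for which the bound holds trivially). -/

import Mathlib

/-- `d_Δ(x) = (1/L)(Δ·cot(πΔx/L) − (1/2)·cot(πx/(2L)))`, where `cot u = cos u / sin u`. -/
noncomputable def dDelta (L : ℕ) (Δ x : ℝ) : ℝ :=
  (1 / (L : ℝ)) *
    (Δ * (Real.cos (Real.pi * Δ * x / L) / Real.sin (Real.pi * Δ * x / L)) -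
      (1 / 2) * (Real.cos (Real.pi * x / (2 * L)) / Real.sin (Real.pi * x / (2 * L))))

open Real in
lemma cot_sub_inv_bound {t : ℝ} (ht : 0 < t) (ht' : t < π) :
    |Real.cos t / Real.sin t - 1 / t| ≤ 12 / (π - t) := by
  have hπ3 : (3:ℝ) < π := Real.pi_gt_three
  have hπ315 : π < 3.15 := by
    have := Real.pi_lt_d2
    linarith
  have hπt : 0 < π - t := by linarith
  rcases le_or_gt t (π/2) with h | h
  · -- t ≤ π/2
    have hs : 0 < Real.sin t := Real.sin_pos_of_pos_of_lt_pi ht ht'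
    have hj : 2/π * t ≤ Real.sin t := Real.mul_le_sin ht.le h
    have hj' : 2*t ≤ π * Real.sin t := by
      rw [div_mul_eq_mul_div, div_le_iff₀ Real.pi_pos] at hj
      linarith [mul_comm (Real.sin t) π]
    have hcos : 1 - t^2/2 ≤ Real.cos t := Real.one_sub_sq_div_two_le_cos
    have hsin_le : Real.sin t ≤ t := (Real.sin_lt ht).le
    have hcos1 : Real.cos t ≤ 1 := Real.cos_le_one t
    have hcub : t - Real.sin t ≤ (3/4) * t^3 := by
      rcases le_or_gt t 1 with h1 | h1
      · nlinarith [Real.sin_gt_sub_cube ht]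
      · nlinarith [hj', sq_nonneg t, mul_pos ht ht]
    have hnum : |t * Real.cos t - Real.sin t| ≤ (5/4)*t^3 := by
      rw [abs_le]
      constructor
      · nlinarith
      · nlinarith
    have heq : Real.cos t / Real.sin t - 1/t =
        (t*Real.cos t - Real.sin t)/(t*Real.sin t) := by
      field_simp
    rw [heq, abs_div]
    have hts : 0 < t * Real.sin t := by positivity
    rw [abs_of_pos hts, div_le_div_iff₀ hts hπt]
    have step1 : |t * Real.cos t - Real.sin t| * (π - t) ≤ (5/4)*t^3 * π :=
      mul_le_mul hnum (by linarith) (by linarith) (by positivity)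
    have hq : t^3 * π^2 ≤ t^2 * (π^3/2) := by
      nlinarith [mul_le_mul_of_nonneg_right h (show (0:ℝ) ≤ t^2*π^2 by positivity)]
    have hπcube : π^3 ≤ 32 := by nlinarith [Real.pi_pos]
    have step2 : (5/4)*t^3*π*π ≤ 24*t^2 := by nlinarith [hq, hπcube, sq_nonneg t]
    have step3 : 24*t^2 ≤ 12*(t*Real.sin t)*π := by nlinarith [mul_pos ht ht]
    have chain : |t * Real.cos t - Real.sin t| * (π - t) * π ≤ 12*(t*Real.sin t)*π := by
      have s1 := mul_le_mul_of_nonneg_right step1 Real.pi_pos.le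
      linarith
    exact le_of_mul_le_mul_right chain Real.pi_pos
  · -- π/2 < t
    have hs : 0 < Real.sin t := Real.sin_pos_of_pos_of_lt_pi ht ht'
    have hsin_ge : 2/π * (π - t) ≤ Real.sin t := by
      have := Real.mul_le_sin (x := π - t) (by linarith) (by linarith)
      rwa [Real.sin_pi_sub] at this
    have hsin_ge' : 2*(π-t) ≤ π * Real.sin t := by
      rw [div_mul_eq_mul_div, div_le_iff₀ Real.pi_pos] at hsin_ge
      linarith [mul_comm (Real.sin t) π]
    have htri : |Real.cos t / Real.sin t - 1/t| ≤ |Real.cos t / Real.sin t| + |1/t| := by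
      simpa [sub_eq_add_neg] using abs_add_le (Real.cos t / Real.sin t) (-(1/t))
    have h1 : |Real.cos t / Real.sin t| ≤ 1 / Real.sin t := by
      rw [abs_div, abs_of_pos hs]
      gcongr
      exact Real.abs_cos_le_one t
    have h2 : 1 / Real.sin t ≤ π/(2*(π-t)) := by
      rw [div_le_div_iff₀ hs (by linarith)]
      linarith
    have h3 : |1/t| ≤ 2/π := by
      rw [abs_of_pos (by positivity : (0:ℝ) < 1/t), div_le_div_iff₀ ht Real.pi_pos]
      linarith
    have h4 : 2/π ≤ 1/(π-t) := by
      rw [div_le_div_iff₀ Real.pi_pos hπt]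
      linarith
    have hinv : 0 < 1/(π-t) := by positivity
    have h5 : π/(2*(π-t)) = (π/2) * (1/(π-t)) := by
      field_simp
    have h6 : 12/(π-t) = 12 * (1/(π-t)) := by ring
    have hmul : (π/2) * (1/(π-t)) + (1/(π-t)) ≤ 12 * (1/(π-t)) := by
      have h7 := mul_le_mul_of_nonneg_right (show (π/2 : ℝ) + 1 ≤ 12 by linarith) hinv.le
      calc (π/2) * (1/(π-t)) + (1/(π-t)) = (π/2 + 1) * (1/(π-t)) := by ring
        _ ≤ 12 * (1/(π-t)) := h7
    linarith [htri, h1, h2, h3, h4, hmul, h5.le, h5.ge, h6.le, h6.ge]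

lemma dDelta_neg (L : ℕ) (Δ x : ℝ) : dDelta L Δ (-x) = - dDelta L Δ x := by
  unfold dDelta
  simp only [mul_neg, neg_div, Real.sin_neg, Real.cos_neg]
  ring

lemma dDelta_bound_pos (L : ℕ) (hL : 0 < L) (Δ : ℝ) (hΔ : 0 < Δ) (hΔ' : Δ ≤ 1/2)
    (x : ℝ) (hx : 0 < x) (hx2 : x < 2 * (L : ℝ)) :
    |dDelta L Δ x| ≤ 12 / (2 * (L : ℝ) - x) := by
  have hLpos : (0:ℝ) < L := by exact_mod_cast hL
  have hπ := Real.pi_pos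
  set a := Real.pi * Δ * x / (L : ℝ) with ha_def
  set b := Real.pi * x / (2 * (L : ℝ)) with hb_def
  have hb_pos : 0 < b := by rw [hb_def]; positivity
  have hb_lt : b < Real.pi := by
    rw [hb_def, div_lt_iff₀ (by positivity)]
    nlinarith
  have ha_eq : a = 2 * Δ * b := by
    rw [ha_def, hb_def]; field_simp
  have ha_pos : 0 < a := by rw [ha_def]; positivity
  have ha_le : a ≤ b := by
    rw [ha_eq]
    nlinarith
  have ha_lt : a < Real.pi := lt_of_le_of_lt ha_le hb_lt
  have key : Δ * (1/a) = (1/2) * (1/b) := by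
    rw [ha_def, hb_def]
    field_simp
  have expand : dDelta L Δ x =
      (1/(L:ℝ)) * (Δ * (Real.cos a / Real.sin a - 1/a)
        - (1/2) * (Real.cos b / Real.sin b - 1/b)) := by
    unfold dDelta
    rw [← ha_def, ← hb_def]
    linear_combination (1/(L:ℝ)) * key
  have bda := cot_sub_inv_bound ha_pos ha_lt
  have bdb := cot_sub_inv_bound hb_pos hb_lt
  have hπa : 0 < Real.pi - a := by linarith
  have hπb : 0 < Real.pi - b := by linarith
  have hmono : 12 / (Real.pi - a) ≤ 12 / (Real.pi - b) := by
    apply div_le_div_of_nonneg_left (by norm_num) hπb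
    linarith
  have hA : |Δ * (Real.cos a / Real.sin a - 1/a)| ≤ (1/2) * (12 / (Real.pi - b)) := by
    rw [abs_mul, abs_of_pos hΔ]
    calc Δ * |Real.cos a / Real.sin a - 1/a| ≤ (1/2) * (12 / (Real.pi - a)) := by
          apply mul_le_mul hΔ' bda (abs_nonneg _) (by norm_num)
      _ ≤ (1/2) * (12 / (Real.pi - b)) := by linarith
  have hB : |(1/2) * (Real.cos b / Real.sin b - 1/b)| ≤ (1/2) * (12 / (Real.pi - b)) := by
    rw [abs_mul]
    have : |(1/2 : ℝ)| = 1/2 := by norm_num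
    rw [this]
    linarith [bdb]
  have htri : |Δ * (Real.cos a / Real.sin a - 1/a)
      - (1/2) * (Real.cos b / Real.sin b - 1/b)| ≤ 12 / (Real.pi - b) := by
    calc |Δ * (Real.cos a / Real.sin a - 1/a) - (1/2) * (Real.cos b / Real.sin b - 1/b)|
        ≤ |Δ * (Real.cos a / Real.sin a - 1/a)| + |(1/2) * (Real.cos b / Real.sin b - 1/b)| := by
          simpa [sub_eq_add_neg] using abs_add_le (Δ * (Real.cos a / Real.sin a - 1/a))
            (-((1/2) * (Real.cos b / Real.sin b - 1/b)))
      _ ≤ 12 / (Real.pi - b) := by linarith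
  rw [expand, abs_mul, abs_of_pos (by positivity : (0:ℝ) < 1/(L:ℝ))]
  have hfin : (1/(L:ℝ)) * (12 / (Real.pi - b)) ≤ 12 / (2 * (L:ℝ) - x) := by
    have h2Lx : (0:ℝ) < 2 * (L:ℝ) - x := by linarith
    have hπbeq : Real.pi - b = Real.pi * (2 * (L:ℝ) - x) / (2 * (L:ℝ)) := by
      rw [hb_def]; field_simp
    rw [hπbeq]
    have heq2 : (1/(L:ℝ)) * (12 / (Real.pi * (2*(L:ℝ)-x)/(2*(L:ℝ)))) =
        24/(Real.pi * (2*(L:ℝ)-x)) := by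
      field_simp
      ring
    rw [heq2, div_le_div_iff₀ (by positivity) h2Lx]
    nlinarith [Real.pi_gt_three, h2Lx]
  calc (1/(L:ℝ)) * |_| ≤ (1/(L:ℝ)) * (12 / (Real.pi - b)) := by
        apply mul_le_mul_of_nonneg_left htri (by positivity)
    _ ≤ 12 / (2 * (L:ℝ) - x) := hfin

/-- There is a constant `C > 0` such that for every positive
integer `L`, every `Δ ∈ (0, 1/2]`, and every real `x` with `0 < |x| < 2L`,
`|d_Δ(x)| ≤ C/(2L − |x|)`. -/
theorem dDelta_bound :
    ∃ C > (0 : ℝ), ∀ L : ℕ, 0 < L → ∀ Δ : ℝ, 0 < Δ → Δ ≤ 1 / 2 →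
      ∀ x : ℝ, 0 < |x| → |x| < 2 * (L : ℝ) →
        |dDelta L Δ x| ≤ C / (2 * (L : ℝ) - |x|) := by
  refine ⟨12, by norm_num, fun L hL Δ hΔ hΔ' x hx hx2 => ?_⟩
  rcases lt_trichotomy x 0 with h | h | h
  · have : |x| = -x := abs_of_neg h
    rw [this] at hx2 ⊢
    have := dDelta_bound_pos L hL Δ hΔ hΔ' (-x) (by linarith) hx2
    rw [dDelta_neg, abs_neg] at this
    exact this
  · simp [h] at hx
  · have : |x| = x := abs_of_pos h
    rw [this] at hx2 ⊢
    exact dDelta_bound_pos L hL Δ hΔ hΔ' x h hx2
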